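/- Let τ > 0 and let h, g : ℝ → ℝ be such that h is continuously differentiable on [0, τ] with |h(s)| ≤ M₀ and |h'(s)| ≤ M₁ for all s ∈ [0, τ], and g is twice continuously differentiable on [0, τ] with |g'(s)| ≤ N₁ and |g''(s)| ≤ N₂ for all s ∈ [0, τ]. Then |∫₀^τ h(s)·(g(s) - g(τ/2)) ds| ≤ (M₁·N₁/12 + M₀·N₂/24)·τ³. -/
import Mathlib

open Set MeasureTheory intervalIntegral

/-- Midpoint quadrature estimate: if `h` is `C¹` on `[0, τ]` with `|h| ≤ M₀`,
`|h'| ≤ M₁`, and `g` is `C²` on `[0, τ]` with `|g'| ≤ N₁`, `|g''| ≤ N₂`, then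
`|∫₀^τ h(s)(g(s) - g(τ/2)) ds| ≤ (M₁N₁/12 + M₀N₂/24) τ³`. -/
theorem midpoint_quadrature_estimate
    (τ M₀ M₁ N₁ N₂ : ℝ) (hτ : 0 < τ)
    (h g h' g' g'' : ℝ → ℝ)
    (hh : ∀ s ∈ Set.Icc (0 : ℝ) τ, HasDerivWithinAt h (h' s) (Set.Icc 0 τ) s)
    (hh'c : ContinuousOn h' (Set.Icc 0 τ))
    (hhM₀ : ∀ s ∈ Set.Icc (0 : ℝ) τ, |h s| ≤ M₀)
    (hhM₁ : ∀ s ∈ Set.Icc (0 : ℝ) τ, |h' s| ≤ M₁)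
    (hg : ∀ s ∈ Set.Icc (0 : ℝ) τ, HasDerivWithinAt g (g' s) (Set.Icc 0 τ) s)
    (hg' : ∀ s ∈ Set.Icc (0 : ℝ) τ, HasDerivWithinAt g' (g'' s) (Set.Icc 0 τ) s)
    (hg''c : ContinuousOn g'' (Set.Icc 0 τ))
    (hgN₁ : ∀ s ∈ Set.Icc (0 : ℝ) τ, |g' s| ≤ N₁)
    (hgN₂ : ∀ s ∈ Set.Icc (0 : ℝ) τ, |g'' s| ≤ N₂) :
    |∫ s in (0 : ℝ)..τ, h s * (g s - g (τ / 2))|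
      ≤ (M₁ * N₁ / 12 + M₀ * N₂ / 24) * τ ^ 3 := by
  set m := τ / 2 with hmdef
  have hτ0 : (0 : ℝ) ≤ τ := hτ.le
  have hmem : m ∈ Icc (0 : ℝ) τ := ⟨by positivity, by simp only [hmdef]; linarith⟩
  have hM₀ : 0 ≤ M₀ := (abs_nonneg _).trans (hhM₀ m hmem)
  have hM₁ : 0 ≤ M₁ := (abs_nonneg _).trans (hhM₁ m hmem)
  have hN₁ : 0 ≤ N₁ := (abs_nonneg _).trans (hgN₁ m hmem)
  have hN₂ : 0 ≤ N₂ := (abs_nonneg _).trans (hgN₂ m hmem)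
  have hch : ContinuousOn h (Icc 0 τ) := fun s hs => (hh s hs).continuousWithinAt
  have hcg : ContinuousOn g (Icc 0 τ) := fun s hs => (hg s hs).continuousWithinAt
  have hcg' : ContinuousOn g' (Icc 0 τ) := fun s hs => (hg' s hs).continuousWithinAt
  -- Lipschitz bound for h
  have hlip : ∀ s ∈ Icc (0 : ℝ) τ, |h s - h m| ≤ M₁ * |s - m| := fun s hs =>
    (convex_Icc (0 : ℝ) τ).norm_image_sub_le_of_norm_hasDerivWithin_le hh hhM₁ hmem hs
  -- Lipschitz bound for g'
  have hlipg' : ∀ s ∈ Icc (0 : ℝ) τ, ∀ t ∈ Icc (0 : ℝ) τ, |g' t - g' s| ≤ N₂ * |t - s| :=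
    fun s hs t ht =>
    (convex_Icc (0 : ℝ) τ).norm_image_sub_le_of_norm_hasDerivWithin_le hg' hgN₂ hs ht
  -- FTC for g on subintervals
  have hFTC : ∀ a ∈ Icc (0 : ℝ) τ, ∀ b ∈ Icc (0 : ℝ) τ, a ≤ b →
      g b - g a = ∫ t in a..b, g' t := by
    intro a ha b hb hab
    have hsub : Icc a b ⊆ Icc (0 : ℝ) τ := Icc_subset_Icc ha.1 hb.2
    have hint : IntervalIntegrable g' volume a b :=
      (hcg'.mono hsub).intervalIntegrable_of_Icc hab
    rw [← integral_eq_sub_of_hasDeriv_right_of_le hab (hcg.mono hsub) ?_ hint]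
    intro x hx
    have hx' : x ∈ Ioo (0 : ℝ) τ := ⟨lt_of_le_of_lt ha.1 hx.1, lt_of_lt_of_le hx.2 hb.2⟩
    exact ((hg x (Ioo_subset_Icc_self hx')).hasDerivAt
      (Icc_mem_nhds hx'.1 hx'.2)).hasDerivWithinAt
  -- Taylor remainder bound
  have hR : ∀ s ∈ Icc (0 : ℝ) τ, |g s - g m - g' m * (s - m)| ≤ N₂ / 2 * (s - m) ^ 2 := by
    intro s hs
    have hintc : ∀ a b : ℝ, Icc a b ⊆ Icc (0:ℝ) τ → a ≤ b →
        IntervalIntegrable (fun t => g' t - g' m) volume a b := by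
      intro a b hsub hab
      exact (((hcg'.mono hsub).sub continuousOn_const)).intervalIntegrable_of_Icc hab
    rcases le_total m s with hms | hsm
    · have hsub : Icc m s ⊆ Icc (0 : ℝ) τ := Icc_subset_Icc hmem.1 hs.2
      have heq : g s - g m - g' m * (s - m) = ∫ t in m..s, (g' t - g' m) := by
        rw [intervalIntegral.integral_sub
          ((hcg'.mono hsub).intervalIntegrable_of_Icc hms) intervalIntegrable_const,
          intervalIntegral.integral_const, ← hFTC m hmem s hs hms]
        simp [smul_eq_mul]; ring
      rw [heq]
      calc |∫ t in m..s, (g' t - g' m)| ≤ ∫ t in m..s, |g' t - g' m| :=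
            intervalIntegral.abs_integral_le_integral_abs hms
        _ ≤ ∫ t in m..s, N₂ * (t - m) := by
            apply intervalIntegral.integral_mono_on hms
            · exact ((hcg'.mono hsub).sub continuousOn_const).abs.intervalIntegrable_of_Icc hms
            · exact (continuous_const.mul (continuous_id.sub continuous_const)).intervalIntegrable _ _
            · intro t ht
              have h1 := hlipg' m hmem t (hsub ht)
              rwa [abs_of_nonneg (show (0:ℝ) ≤ t - m by linarith [ht.1])] at h1
        _ = N₂ / 2 * (s - m) ^ 2 := by
            rw [intervalIntegral.integral_const_mul,
              intervalIntegral.integral_comp_sub_right (fun x => x) m]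
            simp [integral_id]; ring
    · have hsub : Icc s m ⊆ Icc (0 : ℝ) τ := Icc_subset_Icc hs.1 hmem.2
      have heq : g m - g s - g' m * (m - s) = ∫ t in s..m, (g' t - g' m) := by
        rw [intervalIntegral.integral_sub
          ((hcg'.mono hsub).intervalIntegrable_of_Icc hsm) intervalIntegrable_const,
          intervalIntegral.integral_const, ← hFTC s hs m hmem hsm]
        simp [smul_eq_mul]; ring
      have habs : |g s - g m - g' m * (s - m)| = |g m - g s - g' m * (m - s)| := by
        rw [← abs_neg]; ring_nf
      rw [habs, heq]
      calc |∫ t in s..m, (g' t - g' m)| ≤ ∫ t in s..m, |g' t - g' m| :=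
            intervalIntegral.abs_integral_le_integral_abs hsm
        _ ≤ ∫ t in s..m, N₂ * (m - t) := by
            apply intervalIntegral.integral_mono_on hsm
            · exact ((hcg'.mono hsub).sub continuousOn_const).abs.intervalIntegrable_of_Icc hsm
            · exact (continuous_const.mul (continuous_const.sub continuous_id)).intervalIntegrable _ _
            · intro t ht
              have h1 := hlipg' m hmem t (hsub ht)
              rwa [abs_of_nonpos (show t - m ≤ (0:ℝ) by linarith [ht.2]), neg_sub] at h1
        _ = N₂ / 2 * (s - m) ^ 2 := by
            rw [intervalIntegral.integral_const_mul,
              intervalIntegral.integral_comp_sub_left (fun x => x) m]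
            simp [integral_id]; ring
  -- pointwise bound on the integrand minus the linear term
  set C : ℝ := M₁ * N₁ + M₀ * N₂ / 2 with hCdef
  have key : ∀ s ∈ Icc (0 : ℝ) τ,
      |h s * (g s - g m) - h m * g' m * (s - m)| ≤ C * (s - m) ^ 2 := by
    intro s hs
    have hid : h s * (g s - g m) - h m * g' m * (s - m)
        = (h s - h m) * (g' m * (s - m)) + h s * (g s - g m - g' m * (s - m)) := by ring
    rw [hid]
    calc |(h s - h m) * (g' m * (s - m)) + h s * (g s - g m - g' m * (s - m))|
        ≤ |(h s - h m) * (g' m * (s - m))| + |h s * (g s - g m - g' m * (s - m))| :=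
          abs_add_le _ _
      _ ≤ (M₁ * |s - m|) * (N₁ * |s - m|) + M₀ * (N₂ / 2 * (s - m) ^ 2) := by
          apply add_le_add
          · rw [abs_mul, abs_mul]
            exact mul_le_mul (hlip s hs)
              (mul_le_mul_of_nonneg_right (hgN₁ m hmem) (abs_nonneg _))
              (by positivity) (by positivity)
          · rw [abs_mul]
            exact mul_le_mul (hhM₀ s hs) (hR s hs) (abs_nonneg _) hM₀
      _ = C * (s - m) ^ 2 := by rw [hCdef, ← sq_abs (s - m)]; ring
  -- the linear term integrates to zero
  have hzero : (∫ s in (0 : ℝ)..τ, (h m * g' m) * (s - m)) = 0 := by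
    rw [intervalIntegral.integral_const_mul,
      intervalIntegral.integral_comp_sub_right (fun x => x) m]
    simp [integral_id, hmdef]
    ring_nf
    norm_num
  -- integrabilities
  have hφc : ContinuousOn (fun s => h s * (g s - g m) - h m * g' m * (s - m)) (Icc 0 τ) :=
    (hch.mul (hcg.sub continuousOn_const)).sub
      (continuousOn_const.mul (continuousOn_id.sub continuousOn_const))
  have hint1 : IntervalIntegrable (fun s => h s * (g s - g m)) volume 0 τ :=
    (hch.mul (hcg.sub continuousOn_const)).intervalIntegrable_of_Icc hτ0
  have hint2 : IntervalIntegrable (fun s => (h m * g' m) * (s - m)) volume 0 τ :=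
    (continuous_const.mul (continuous_id.sub continuous_const)).intervalIntegrable _ _
  have hsplit : (∫ s in (0 : ℝ)..τ, h s * (g s - g m))
      = ∫ s in (0 : ℝ)..τ, (h s * (g s - g m) - h m * g' m * (s - m)) := by
    rw [intervalIntegral.integral_sub hint1 hint2, hzero, sub_zero]
  have hquad : (∫ s in (0 : ℝ)..τ, C * (s - m) ^ 2) = C * (τ ^ 3 / 12) := by
    rw [intervalIntegral.integral_const_mul,
      intervalIntegral.integral_comp_sub_right (fun x => x ^ 2) m]
    rw [integral_pow]
    simp only [hmdef]
    ring
  have hintφ : IntervalIntegrable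
      (fun s => h s * (g s - g m) - h m * g' m * (s - m)) volume 0 τ :=
    hφc.intervalIntegrable_of_Icc hτ0
  calc |∫ s in (0 : ℝ)..τ, h s * (g s - g m)|
      = |∫ s in (0 : ℝ)..τ, (h s * (g s - g m) - h m * g' m * (s - m))| := by rw [hsplit]
    _ ≤ ∫ s in (0 : ℝ)..τ, |h s * (g s - g m) - h m * g' m * (s - m)| :=
        intervalIntegral.abs_integral_le_integral_abs hτ0
    _ ≤ ∫ s in (0 : ℝ)..τ, C * (s - m) ^ 2 := by
        apply intervalIntegral.integral_mono_on hτ0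
        · exact hφc.abs.intervalIntegrable_of_Icc hτ0
        · exact (continuous_const.mul ((continuous_id.sub continuous_const).pow 2)).intervalIntegrable _ _
        · exact key
    _ = C * (τ ^ 3 / 12) := hquad
    _ = (M₁ * N₁ / 12 + M₀ * N₂ / 24) * τ ^ 3 := by rw [hCdef]; ring
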